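/- Let m be a nonzero integer and let p be a prime number with p ≡ 1 (mod 4|m|). Then the Legendre symbol (m | p) equals 1; in particular, m is a nonzero square modulo p. -/
import Mathlib

theorem legendreSym_eq_one_of_modeq (m : ℤ) (hm : m ≠ 0)
    (p : ℕ) [Fact p.Prime] (hp : (p : ℤ) ≡ 1 [ZMOD 4 * |m|]) :
    legendreSym p m = 1 ∧ (m : ZMod p) ≠ 0 ∧ IsSquare (m : ZMod p) := by
  have hmod : (p : ℤ) % (4 * |m|) = 1 % (4 * |m|) := hp
  have hm1 : (1 : ℤ) ≤ |m| := Int.one_le_abs hm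
  have h1 : (1 : ℤ) % (4 * |m|) = 1 := Int.emod_eq_of_lt (by norm_num) (by linarith)
  rw [h1] at hmod
  have hmodn : p % (4 * m.natAbs) = 1 := by
    have : ((p % (4 * m.natAbs) : ℕ) : ℤ) = 1 := by
      rw [Int.natCast_mod]; push_cast; exact hmod
    exact_mod_cast this
  have hodd : Odd p := by
    rcases (Fact.out : p.Prime).eq_two_or_odd' with h | h
    · exfalso
      subst h
      rw [Int.emod_eq_of_lt (by norm_num) (by push_cast; linarith)] at hmod
      norm_num at hmod
    · exact h
  have hJ : legendreSym p m = 1 := by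
    rw [jacobiSym.legendreSym.to_jacobiSym, jacobiSym.mod_right m hodd, hmodn,
      jacobiSym.one_right]
  refine ⟨hJ, ?_, ?_⟩
  · intro h0
    rw [(legendreSym.eq_zero_iff p m).mpr h0] at hJ
    exact one_ne_zero hJ.symm
  · exact ZMod.isSquare_of_jacobiSym_eq_one
      (by rw [← jacobiSym.legendreSym.to_jacobiSym]; exact hJ)
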